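/- If M is an abelian group with a divisible underlying group, then for any ring R, the R-module Hom_ℤ(R, M) of additive maps from R to M, with R acting by (r·f)(x) = f(xr), is an injective R-module. -/
import Mathlib


/-- The `R`-module structure on the additive maps `R →+ M` given by `(r • f) x = f (x * r)`. -/
def homModule (R : Type*) [Ring R] (M : Type*) [AddCommGroup M] : Module R (R →+ M) where
  smul r f := f.comp (AddMonoidHom.mulRight r)
  one_smul f := AddMonoidHom.ext fun x => by show f (x * 1) = f x; rw [mul_one]
  mul_smul r s f := AddMonoidHom.ext fun x => by
    show f (x * (r * s)) = f (x * r * s); rw [mul_assoc]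
  smul_zero r := AddMonoidHom.ext fun _ => rfl
  smul_add r f g := AddMonoidHom.ext fun _ => rfl
  add_smul r s f := AddMonoidHom.ext fun x => by
    show f (x * (r + s)) = f (x * r) + f (x * s); rw [mul_add, map_add]
  zero_smul f := AddMonoidHom.ext fun x => by show f (x * 0) = 0; rw [mul_zero, map_zero]

theorem hom_from_divisible_injective (R : Type*) [Ring R]
    (M : Type*) [AddCommGroup M]
    (hdiv : ∀ (d : M) (n : ℤ), n ≠ 0 → ∃ e : M, n • e = d) :
    letI := homModule R M
    Module.Injective R (R →+ M) := by
  letI := homModule R M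
  haveI : DivisibleBy M ℤ :=
    { div := fun m n => if h : n = 0 then 0 else (hdiv m n h).choose
      div_zero := fun a => by simp
      div_cancel := fun {n} a hn => by
        simp only [dif_neg hn]
        exact (hdiv a n hn).choose_spec }
  have baer : Module.Baer ℤ M := Module.Baer.of_divisible M
  constructor
  intro X Y _ _ _ _ f hf g
  obtain ⟨ψ, hψ⟩ := baer.extension_property_addMonoidHom f.toAddMonoidHom hf
    { toFun := fun x => g x 1
      map_zero' := by simp
      map_add' := fun x y => by simp }
  have hψ' : ∀ x : X, ψ (f x) = g x 1 := fun x => DFunLike.congr_fun hψ x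
  refine ⟨{ toFun := fun y => ψ.comp ((smulAddHom R Y).flip y)
            map_add' := fun y z => AddMonoidHom.ext fun r => by
              simp [map_add]
            map_smul' := fun r y => AddMonoidHom.ext fun x => by
              show ψ (x • r • y) = ψ ((x * r) • y)
              rw [mul_smul] }, fun x => AddMonoidHom.ext fun r => ?_⟩
  show ψ (r • f x) = g x r
  rw [← f.map_smul, hψ' (r • x), g.map_smul]
  show g x (1 * r) = g x r
  rw [one_mul]
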